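/- Let Z be a totally positive 6×n real matrix, and let V, V′ ⊆ ℝ^n be distinct 2-dimensional totally nonnegative subspaces, both of which are orthodox. Then Z(V) ≠ Z(V′). -/

import Mathlib

set_option maxRecDepth 2000


/-- `d` is an `i`-domino (0-based indices). -/
def IsDominoAt {n : ℕ} (i : Fin n) (d : Fin n → ℝ) : Prop :=
  if h : (i : ℕ) + 1 < n then
    0 < d i * d ⟨(i : ℕ) + 1, h⟩ ∧
      ∀ j : Fin n, (j : ℕ) ≠ (i : ℕ) → (j : ℕ) ≠ (i : ℕ) + 1 → d j = 0
  else
    d i ≠ 0 ∧ ∀ j : Fin n, j ≠ i → d j = 0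

/-- A nonzero domino. -/
def IsDomino {n : ℕ} (d : Fin n → ℝ) : Prop := ∃ i : Fin n, IsDominoAt i d

/-- A positive domino with index `i`. -/
def IsPosDominoAt {n : ℕ} (i : Fin n) (d : Fin n → ℝ) : Prop :=
  IsDominoAt i d ∧ 0 < d i

/-- `barVec v` is `v` with its last coordinate replaced by `0`. -/
def barVec {n : ℕ} (v : Fin n → ℝ) : Fin n → ℝ :=
  fun j => if (j : ℕ) = n - 1 then 0 else v j

/-- All maximal minors of `A` are nonnegative. -/
def MinorsNonneg {k n : ℕ} (A : Matrix (Fin k) (Fin n) ℝ) : Prop :=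
  ∀ f : Fin k → Fin n, StrictMono f → 0 ≤ (A.submatrix id f).det

/-- All maximal (`a × a`) minors of the `a × n` matrix `Z` are positive. -/
def MinorsPos {a n : ℕ} (Z : Matrix (Fin a) (Fin n) ℝ) : Prop :=
  ∀ f : Fin a → Fin n, StrictMono f → 0 < (Z.submatrix id f).det

/-- `V` is a `k`-dimensional totally nonnegative subspace of `ℝ^n`. -/
def IsTNNSubspace (k n : ℕ) (V : Submodule ℝ (Fin n → ℝ)) : Prop :=
  ∃ A : Matrix (Fin k) (Fin n) ℝ,
    LinearIndependent ℝ (fun i => A i) ∧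
    Submodule.span ℝ (Set.range fun i => A i) = V ∧
    MinorsNonneg A

/-- `V` is orthodox with standard basis vectors `d, e` and fundamental dominoes
`d1, d2, d3, d4`: the `dᵢ` are linearly independent positive dominoes with 0-based
indices `i1 + 1 < i2 ≤ i3 < i4 - 1` and `i4 ≤ n - 3` (1-based: `i_4 ≤ n - 2`),
`V = span{d, e}`, `d̄ = d1 + d2` with `d` negative in its last coordinate, and
`ē = d3 + d4` with `e` positive in its last coordinate. -/
def OrthodoxWith {n : ℕ} (V : Submodule ℝ (Fin n → ℝ))
    (d e d1 d2 d3 d4 : Fin n → ℝ) : Prop :=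
  (∃ i1 i2 i3 i4 : Fin n,
    IsPosDominoAt i1 d1 ∧ IsPosDominoAt i2 d2 ∧ IsPosDominoAt i3 d3 ∧
    IsPosDominoAt i4 d4 ∧
    (i1 : ℕ) + 1 < (i2 : ℕ) ∧ (i2 : ℕ) ≤ (i3 : ℕ) ∧ (i3 : ℕ) + 1 < (i4 : ℕ) ∧
    (i4 : ℕ) + 3 ≤ n) ∧
  LinearIndependent ℝ ![d1, d2, d3, d4] ∧
  V = Submodule.span ℝ {d, e} ∧
  barVec d = d1 + d2 ∧ (∀ j : Fin n, (j : ℕ) = n - 1 → d j < 0) ∧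
  barVec e = d3 + d4 ∧ (∀ j : Fin n, (j : ℕ) = n - 1 → 0 < e j)

/-- `V` is deviant with standard basis vectors `d, e` and fundamental dominoes
`d1, d2, d3, d4`: the `dᵢ` are linearly independent positive dominoes with 0-based
indices `i1 < i2`, `i2 + 1 < i3 ≤ i4 ≤ n - 3` (1-based: `i_4 ≤ n - 2`),
`V = span{d, e}`, `d̄ = d1 - d4` with `d` negative in its last coordinate, and
`e = d1 + d2 + d3`. -/
def DeviantWith {n : ℕ} (V : Submodule ℝ (Fin n → ℝ))
    (d e d1 d2 d3 d4 : Fin n → ℝ) : Prop :=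
  (∃ i1 i2 i3 i4 : Fin n,
    IsPosDominoAt i1 d1 ∧ IsPosDominoAt i2 d2 ∧ IsPosDominoAt i3 d3 ∧
    IsPosDominoAt i4 d4 ∧
    (i1 : ℕ) < (i2 : ℕ) ∧ (i2 : ℕ) + 1 < (i3 : ℕ) ∧ (i3 : ℕ) ≤ (i4 : ℕ) ∧
    (i4 : ℕ) + 3 ≤ n) ∧
  LinearIndependent ℝ ![d1, d2, d3, d4] ∧
  V = Submodule.span ℝ {d, e} ∧
  barVec d = d1 - d4 ∧ (∀ j : Fin n, (j : ℕ) = n - 1 → d j < 0) ∧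
  e = d1 + d2 + d3

/-- `V` is orthodox (for some choice of data). -/
def IsOrthodox {n : ℕ} (V : Submodule ℝ (Fin n → ℝ)) : Prop :=
  ∃ d e d1 d2 d3 d4 : Fin n → ℝ, OrthodoxWith V d e d1 d2 d3 d4

/-- `V` is deviant (for some choice of data). -/
def IsDeviant {n : ℕ} (V : Submodule ℝ (Fin n → ℝ)) : Prop :=
  ∃ d e d1 d2 d3 d4 : Fin n → ℝ, DeviantWith V d e d1 d2 d3 d4

namespace OVIO

/-- support of a positive domino -/
lemma domino_supp {n : ℕ} {i : Fin n} {d : Fin n → ℝ} (h : IsPosDominoAt i d)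
    (hi : (i : ℕ) + 1 < n) : ∀ j : Fin n, (j : ℕ) ≠ (i : ℕ) → (j : ℕ) ≠ (i : ℕ) + 1 → d j = 0 := by
  have h1 := h.1
  rw [IsDominoAt, dif_pos hi] at h1
  exact h1.2

lemma domino_pos1 {n : ℕ} {i : Fin n} {d : Fin n → ℝ} (h : IsPosDominoAt i d) : 0 < d i := h.2

lemma domino_pos2 {n : ℕ} {i : Fin n} {d : Fin n → ℝ} (h : IsPosDominoAt i d)
    (hi : (i : ℕ) + 1 < n) : 0 < d ⟨(i : ℕ) + 1, hi⟩ := by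
  have h1 := h.1
  rw [IsDominoAt, dif_pos hi] at h1
  nlinarith [h1.1, h.2]

lemma domino_nonneg {n : ℕ} {i : Fin n} {d : Fin n → ℝ} (h : IsPosDominoAt i d)
    (hi : (i : ℕ) + 1 < n) : ∀ j, 0 ≤ d j := by
  intro j
  by_cases h1 : (j : ℕ) = (i : ℕ)
  · have : j = i := Fin.ext h1
    subst this; exact le_of_lt h.2
  · by_cases h2 : (j : ℕ) = (i : ℕ) + 1
    · have : j = ⟨(i : ℕ) + 1, hi⟩ := Fin.ext h2
      subst this; exact le_of_lt (domino_pos2 h hi)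
    · rw [domino_supp h hi j h1 h2]

/-- a lower (downward-closed) set in `Fin m` is an initial segment -/
lemma lower_card {m : ℕ} (S : Finset (Fin m))
    (hS : ∀ i' i : Fin m, i' ≤ i → i ∈ S → i' ∈ S) :
    ∀ i, i ∈ S ↔ (i : ℕ) < S.card := by
  intro i
  constructor
  · intro hi
    have hsub : Finset.Iic i ⊆ S := by
      intro x hx
      exact hS x i (Finset.mem_Iic.mp hx) hi
    have := Finset.card_le_card hsub
    rw [Fin.card_Iic] at this
    omega
  · intro hi
    by_contra hns
    have hsub : S ⊆ Finset.Iio i := by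
      intro x hx
      rw [Finset.mem_Iio]
      by_contra hxi
      exact hns (hS i x (le_of_not_gt hxi) hx)
    have := Finset.card_le_card hsub
    rw [Fin.card_Iio] at this
    omega

/-- pad a finset with elements larger than everything outside -/
lemma pad {n : ℕ} (k : ℕ) : ∀ F0 : Finset (Fin n), F0.card + k ≤ n →
    ∃ F, F0 ⊆ F ∧ F.card = F0.card + k ∧ ∀ j ∉ F, ∀ x ∈ F, x ∉ F0 → j < x := by
  induction k with
  | zero =>
    intro F0 _
    exact ⟨F0, le_refl _, by simp, fun j hj x hx hx0 => absurd hx hx0⟩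
  | succ k ih =>
    intro F0 hk
    obtain ⟨F, hsub, hcard, hbig⟩ := ih F0 (by omega)
    have hne : (Fᶜ : Finset (Fin n)).Nonempty := by
      rw [← Finset.card_pos, Finset.card_compl, Fintype.card_fin]
      omega
    set M := Fᶜ.max' hne with hM
    have hMF : M ∉ F := by
      have := Fᶜ.max'_mem hne
      rwa [Finset.mem_compl] at this
    refine ⟨insert M F, hsub.trans (Finset.subset_insert _ _), ?_, ?_⟩
    · rw [Finset.card_insert_of_notMem hMF, hcard]; omega
    · intro j hj x hx hx0
      rw [Finset.mem_insert] at hx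
      have hjF : j ∉ F := fun h => hj (Finset.mem_insert_of_mem h)
      rcases hx with rfl | hx
      · have hjc : j ∈ Fᶜ := Finset.mem_compl.mpr hjF
        have := Finset.le_max' _ j hjc
        have hjne : j ≠ M := fun h => hj (h ▸ Finset.mem_insert_self _ _)
        exact lt_of_le_of_ne this hjne
      · exact hbig j hjF x hx hx0



def idx6 (i : Fin 6) : Fin 5 := ⟨min ((i : ℕ) - 1) 4, by omega⟩

def NtM {n : ℕ} (Z : Matrix (Fin 6) (Fin n) ℝ) (t : Fin 5 ↪o Fin n) (v : Fin 6 → ℝ) :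
    Matrix (Fin 6) (Fin 6) ℝ :=
  Matrix.of (fun i r => if (i : ℕ) = 0 then v r else Z r (t (idx6 i)))

lemma NtM_eq_update {n : ℕ} (Z : Matrix (Fin 6) (Fin n) ℝ) (t : Fin 5 ↪o Fin n)
    (v : Fin 6 → ℝ) : NtM Z t v = (NtM Z t 0).updateRow 0 v := by
  ext i r
  by_cases hi : i = 0
  · subst hi; rw [Matrix.updateRow_self]; simp [NtM]
  · rw [Matrix.updateRow_ne hi]
    have : (i : ℕ) ≠ 0 := fun h => hi (Fin.ext h)
    simp [NtM, this, hi]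

lemma NtM_det_zero {n : ℕ} (Z : Matrix (Fin 6) (Fin n) ℝ) (t : Fin 5 ↪o Fin n) :
    (NtM Z t 0).det = 0 := by
  apply Matrix.det_eq_zero_of_row_eq_zero 0
  intro r
  simp [NtM]

lemma NtM_det_sum {n : ℕ} (Z : Matrix (Fin 6) (Fin n) ℝ) (t : Fin 5 ↪o Fin n)
    (s : Finset (Fin n)) (c : Fin n → ℝ) (w : Fin n → Fin 6 → ℝ) :
    (NtM Z t (∑ j ∈ s, c j • w j)).det = ∑ j ∈ s, c j * (NtM Z t (w j)).det := by
  classical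
  induction s using Finset.induction_on with
  | empty => rw [Finset.sum_empty, Finset.sum_empty, NtM_det_zero]
  | insert a s' hnotmem ih =>
    rw [Finset.sum_insert hnotmem, Finset.sum_insert hnotmem, ← ih]
    rw [NtM_eq_update Z t (c a • w a + ∑ j ∈ s', c j • w j),
      Matrix.det_updateRow_add, ← NtM_eq_update Z t (c a • w a), ← NtM_eq_update Z t (∑ j ∈ s', c j • w j)]
    congr 1
    rw [NtM_eq_update Z t (c a • w a), Matrix.det_updateRow_smul, ← NtM_eq_update Z t (w a)]

lemma eval {n : ℕ} (Z : Matrix (Fin 6) (Fin n) ℝ) (hZ : MinorsPos Z)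
    (u : Fin n → ℝ) (hu : Z.mulVec u = 0) (F : Finset (Fin n)) (hF : F.card = 5) :
    ∃ m : Fin n → ℝ, (∀ j ∉ F, 0 < (-1 : ℝ) ^ ((F.filter (· < j)).card) * m j) ∧
      ∑ j ∈ Fᶜ, u j * m j = 0 := by
  classical
  set t := F.orderEmbOfFin hF with ht
  set m : Fin n → ℝ := fun j => (NtM Z t (fun r => Z r j)).det with hm
  have hZu : Z.mulVec u = ∑ j : Fin n, u j • (fun r => Z r j) := by
    ext r
    simp [Matrix.mulVec, dotProduct, Finset.sum_apply, mul_comm]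
  have hsum0 : ∑ j : Fin n, u j * m j = 0 := by
    rw [hm]
    rw [← NtM_det_sum Z t Finset.univ u (fun j r => Z r j), ← hZu, hu, NtM_det_zero]
  have hmF : ∀ j ∈ F, m j = 0 := by
    intro j hj
    have hjr : j ∈ Set.range ⇑t := by
      rw [ht, Finset.range_orderEmbOfFin]; exact hj
    obtain ⟨i0, hi0⟩ := hjr
    have hrow : (NtM Z t (fun r => Z r j)) 0 = (NtM Z t (fun r => Z r j)) ⟨(i0 : ℕ) + 1, by omega⟩ := by
      funext r
      have h1 : ((⟨(i0 : ℕ) + 1, by omega⟩ : Fin 6) : ℕ) ≠ 0 := by simp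
      have h2 : idx6 ⟨(i0 : ℕ) + 1, by omega⟩ = i0 := by
        apply Fin.ext; simp [idx6]; omega
      simp [NtM, h1, h2, hi0]
    exact Matrix.det_zero_of_row_eq (fun h => by have := congrArg Fin.val h; simp only [Fin.val_zero] at this; omega) hrow
  refine ⟨m, ?_, ?_⟩
  swap
  · have := Finset.sum_compl_add_sum F (fun j => u j * m j)
    have hF0 : ∑ j ∈ F, u j * m j = 0 :=
      Finset.sum_eq_zero (fun j hj => by rw [hmF j hj, mul_zero])
    rw [hF0, add_zero] at this
    rw [this, hsum0]
  · intro j hjF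
    set S : Finset (Fin 5) := Finset.univ.filter (fun i => t i < j) with hS
    set c : ℕ := S.card with hc
    have hc5 : c ≤ 5 := by
      calc c ≤ (Finset.univ : Finset (Fin 5)).card := Finset.card_filter_le _ _
      _ = 5 := by simp
    have hiff : ∀ i : Fin 5, t i < j ↔ (i : ℕ) < c := by
      intro i
      have := lower_card S (by
        intro i' i hle hi
        rw [hS, Finset.mem_filter] at hi ⊢
        exact ⟨Finset.mem_univ _, lt_of_le_of_lt (t.monotone hle) hi.2⟩) i
      rw [hS, Finset.mem_filter] at this
      constructor
      · intro h; exact (this.mp ⟨Finset.mem_univ _, h⟩)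
      · intro h; exact (this.mpr h).2
    have hcard_eq : (F.filter (· < j)).card = c := by
      have himg : F.filter (· < j) = S.image ⇑t := by
        ext x
        rw [Finset.mem_filter, Finset.mem_image]
        constructor
        · rintro ⟨hxF, hxj⟩
          have : x ∈ Set.range ⇑t := by rw [Finset.range_orderEmbOfFin]; exact hxF
          obtain ⟨i, rfl⟩ := this
          exact ⟨i, by rw [hS, Finset.mem_filter]; exact ⟨Finset.mem_univ _, hxj⟩, rfl⟩
        · rintro ⟨i, hi, rfl⟩
          rw [hS, Finset.mem_filter] at hi
          exact ⟨Finset.orderEmbOfFin_mem F hF i, hi.2⟩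
      rw [himg, Finset.card_image_of_injective _ t.injective]
    have hjt : ∀ i : Fin 5, ¬ ((i:ℕ) < c) → j < t i := by
      intro i hi
      have h1 : ¬ (t i < j) := fun h => hi ((hiff i).mp h)
      have h2 : t i ≠ j := by
        intro h
        exact hjF (h ▸ Finset.orderEmbOfFin_mem F hF i)
      exact lt_of_le_of_ne (le_of_not_gt h1) (Ne.symm h2)
    set g : Fin 6 → Fin n := fun i =>
      if h : (i : ℕ) < c then t ⟨(i : ℕ), by omega⟩
      else if (i : ℕ) = c then j else t (idx6 i) with hg
    have hidxval : ∀ i : Fin 6, 1 ≤ (i : ℕ) → ((idx6 i : Fin 5) : ℕ) = (i : ℕ) - 1 := by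
      intro i h; simp [idx6]; omega
    have hgv1 : ∀ i : Fin 6, ∀ h : (i : ℕ) < c, g i = t ⟨(i : ℕ), by omega⟩ := by
      intro i h; simp only [hg]; rw [dif_pos h]
    have hgv2 : ∀ i : Fin 6, (i : ℕ) = c → g i = j := by
      intro i h; simp only [hg]; rw [dif_neg (by omega), if_pos h]
    have hgv3 : ∀ i : Fin 6, ¬ ((i : ℕ) < c) → (i : ℕ) ≠ c → g i = t (idx6 i) := by
      intro i h1 h2; simp only [hg]; rw [dif_neg h1, if_neg h2]
    have hg_mono : StrictMono g := by
      intro i i' hii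
      have hii' : (i : ℕ) < (i' : ℕ) := hii
      by_cases h1 : (i : ℕ) < c
      · rw [hgv1 i h1]
        by_cases h2 : (i' : ℕ) < c
        · rw [hgv1 i' h2]
          exact t.strictMono (show (⟨(i:ℕ), by omega⟩ : Fin 5) < ⟨(i':ℕ), by omega⟩ from by simp only [Fin.mk_lt_mk]; omega)
        · have hlt : t ⟨(i : ℕ), by omega⟩ < j := (hiff _).mpr (by simp only [Fin.val_mk]; omega)
          by_cases h3 : (i' : ℕ) = c
          · rw [hgv2 i' h3]; exact hlt
          · rw [hgv3 i' h2 h3]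
            refine lt_trans hlt (hjt _ ?_)
            rw [hidxval i' (by omega)]; omega
      · have h2 : ¬ ((i' : ℕ) < c) := by omega
        by_cases h3 : (i : ℕ) = c
        · rw [hgv2 i h3, hgv3 i' h2 (by omega)]
          refine hjt _ ?_
          rw [hidxval i' (by omega)]; omega
        · rw [hgv3 i h1 h3, hgv3 i' h2 (by omega)]
          refine t.strictMono ?_
          have e1 := hidxval i (by omega)
          have e2 := hidxval i' (by omega)
          simp only [Fin.lt_def]
          omega
    set cc : Fin 6 := ⟨c, by omega⟩ with hcc
    have hcomp : ∀ y : Fin 6,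
        (if ((cc.cycleRange y : Fin 6) : ℕ) = 0 then j else t (idx6 (cc.cycleRange y))) = g y := by
      intro y
      rcases lt_trichotomy y cc with hy | hy | hy
      · rw [Fin.cycleRange_of_lt hy]
        have hyc : (y : ℕ) < c := by rw [Fin.lt_def] at hy; simpa [hcc] using hy
        have hyv : y < Fin.last 5 := by
          rw [Fin.lt_def]; simp [Fin.last]; omega
        have hv : ((y + 1 : Fin 6) : ℕ) = (y : ℕ) + 1 := Fin.val_add_one_of_lt hyv
        rw [if_neg (by omega), hgv1 y hyc]
        congr 1
        apply Fin.ext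
        rw [hidxval _ (by omega), hv]
        simp
      · rw [hy, Fin.cycleRange_self]
        rw [if_pos (show (((0:Fin 6) : Fin 6) : ℕ) = 0 by norm_num), hgv2 cc rfl]
      · rw [Fin.cycleRange_of_gt hy]
        have hyc : c < (y : ℕ) := by rw [Fin.lt_def] at hy; simpa [hcc] using hy
        rw [if_neg (by omega), hgv3 y (by omega) (by omega)]
    have hdet : (Z.submatrix id g).det = (-1 : ℝ) ^ c * m j := by
      set W : Matrix (Fin 6) (Fin 6) ℝ := NtM Z t (fun r => Z r j) with hW
      have htr : (Z.submatrix id g).transpose = W.submatrix (⇑(cc.cycleRange)) id := by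
        ext y r
        have := hcomp y
        simp only [Matrix.transpose_apply, Matrix.submatrix_apply, id_eq, hW, NtM,
          Matrix.of_apply]
        rw [← this]
        by_cases h : ((cc.cycleRange y : Fin 6) : ℕ) = 0 <;> simp [h]
      have h1 : (Z.submatrix id g).det = ((Z.submatrix id g).transpose).det :=
        (Matrix.det_transpose _).symm
      rw [h1, htr, Matrix.det_permute]
      have hsgn : ((Equiv.Perm.sign (cc.cycleRange) : ℤ) : ℝ) = (-1 : ℝ) ^ c := by
        rw [Fin.sign_cycleRange]
        simp [hcc]
      rw [hm]
      push_cast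
      rw_mod_cast [hsgn]
    have hpos := hZ g hg_mono
    rw [hdet] at hpos
    rw [hcard_eq]
    exact hpos


lemma master {n : ℕ} (hn : 6 ≤ n) (Z : Matrix (Fin 6) (Fin n) ℝ) (hZ : MinorsPos Z)
    (u : Fin n → ℝ) (hu : Z.mulVec u = 0) (T : Finset (Fin n)) (hT : T.card ≤ 4)
    (hTN : ∀ x ∈ T, (x : ℕ) < n - 1) (σ : ℝ) (hσ : σ = 1 ∨ σ = -1)
    (H : ∀ j : Fin n, j ∉ T → (j : ℕ) ≠ n - 1 →
      0 ≤ σ * ((-1 : ℝ) ^ ((T.filter (· < j)).card)) * u j) :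
    u = 0 := by
  classical
  set NN : Fin n := ⟨n - 1, by omega⟩ with hNN
  have hNT : NN ∉ T := by
    intro h
    have := hTN NN h
    rw [hNN] at this
    simp only [Fin.val_mk] at this
    omega
  set F0 : Finset (Fin n) := insert NN T with hF0
  have hF0c : F0.card = T.card + 1 := Finset.card_insert_of_notMem hNT
  obtain ⟨F, hsub, hcard, hbig⟩ := pad (5 - F0.card) F0 (by omega)
  have hFc : F.card = 5 := by omega
  obtain ⟨m, hmpos, hmsum⟩ := eval Z hZ u hu F hFc
  have hNF : NN ∈ F := hsub (Finset.mem_insert_self _ _)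
  have hfilter : ∀ j ∉ F, F.filter (· < j) = T.filter (· < j) := by
    intro j hj
    ext x
    simp only [Finset.mem_filter]
    constructor
    · rintro ⟨hxF, hxj⟩
      refine ⟨?_, hxj⟩
      by_contra hxT
      by_cases hx0 : x ∈ F0
      · rw [hF0, Finset.mem_insert] at hx0
        rcases hx0 with rfl | h
        · have h1 : n - 1 < (j : ℕ) := hxj
          have h2 : (j : ℕ) < n := j.isLt
          omega
        · exact hxT h
      · have := hbig j hj x hxF hx0
        have h1 : (x : ℕ) < (j : ℕ) := hxj
        have h2 : (j : ℕ) < (x : ℕ) := this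
        omega
    · rintro ⟨hxT, hxj⟩
      exact ⟨hsub (Finset.mem_insert_of_mem hxT), hxj⟩
  have hjne : ∀ j ∉ F, (j : ℕ) ≠ n - 1 := by
    intro j hj h
    have : j = NN := by rw [hNN]; exact Fin.ext h
    exact hj (this ▸ hNF)
  have hjnT : ∀ j ∉ F, j ∉ T := by
    intro j hj h
    exact hj (hsub (Finset.mem_insert_of_mem h))
  have hzero : ∀ j ∉ F, u j = 0 := by
    have hkey : ∀ j ∈ Fᶜ, u j * m j = 0 := by
      have heps : ∀ j, ((-1:ℝ) ^ ((T.filter (· < j)).card)) * ((-1:ℝ) ^ ((T.filter (· < j)).card)) = 1 := by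
        intro j
        rw [← mul_pow]
        norm_num
      rcases hσ with rfl | rfl
      · have hterms : ∀ j ∈ Fᶜ, 0 ≤ u j * m j := by
          intro j hj
          rw [Finset.mem_compl] at hj
          have hH := H j (hjnT j hj) (hjne j hj)
          have hq := hmpos j hj
          rw [hfilter j hj] at hq
          nlinarith [heps j, mul_nonneg hH hq.le]
        intro j hj
        exact (Finset.sum_eq_zero_iff_of_nonneg hterms).mp hmsum j hj
      · have hterms : ∀ j ∈ Fᶜ, u j * m j ≤ 0 := by
          intro j hj
          rw [Finset.mem_compl] at hj
          have hH := H j (hjnT j hj) (hjne j hj)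
          have hq := hmpos j hj
          rw [hfilter j hj] at hq
          nlinarith [heps j, mul_nonneg hH hq.le]
        intro j hj
        exact (Finset.sum_eq_zero_iff_of_nonpos hterms).mp hmsum j hj
    intro j hj
    have hj' : j ∈ Fᶜ := Finset.mem_compl.mpr hj
    have h1 := hkey j hj'
    have hq := hmpos j hj
    rcases mul_eq_zero.mp h1 with h | h
    · exact h
    · rw [h, mul_zero] at hq; exact absurd hq (lt_irrefl 0)
  funext x
  show u x = 0
  by_cases hxF : x ∈ F
  · have hcne : (Fᶜ : Finset (Fin n)).Nonempty := by
      rw [← Finset.card_pos, Finset.card_compl, Fintype.card_fin, hFc]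
      omega
    obtain ⟨w, hw⟩ := hcne
    have hwF : w ∉ F := Finset.mem_compl.mp hw
    have hwx : w ≠ x := fun h => hwF (h ▸ hxF)
    set F' := insert w (F.erase x) with hF'
    have hxF' : x ∉ F' := by
      rw [hF', Finset.mem_insert]
      push_neg
      exact ⟨Ne.symm hwx, Finset.notMem_erase x F⟩
    have hF'c : F'.card = 5 := by
      rw [hF', Finset.card_insert_of_notMem (fun h => hwF (Finset.mem_of_mem_erase h)),
        Finset.card_erase_of_mem hxF, hFc]
    obtain ⟨m', hm'pos, hm'sum⟩ := eval Z hZ u hu F' hF'c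
    have hsingle : ∑ j ∈ F'ᶜ, u j * m' j = u x * m' x := by
      apply Finset.sum_eq_single_of_mem x (Finset.mem_compl.mpr hxF')
      intro j hj hjx
      have hjF' : j ∉ F' := Finset.mem_compl.mp hj
      have hjF : j ∉ F := by
        intro hjF
        apply hjF'
        rw [hF', Finset.mem_insert]
        exact Or.inr (Finset.mem_erase.mpr ⟨hjx, hjF⟩)
      rw [hzero j hjF, zero_mul]
    rw [hsingle] at hm'sum
    have hq := hm'pos x hxF'
    rcases mul_eq_zero.mp hm'sum with h | h
    · exact h
    · rw [h, mul_zero] at hq; exact absurd hq (lt_irrefl 0)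
  · exact hzero x hxF

lemma applyMaster {n : ℕ} (hn : 6 ≤ n) (Z : Matrix (Fin 6) (Fin n) ℝ) (hZ : MinorsPos Z)
    (u : Fin n → ℝ) (hu : Z.mulVec u = 0) (x y : Fin n)
    (hxy : (x : ℕ) + 1 < (y : ℕ)) (hyN : (y : ℕ) + 1 < n - 1)
    (σ : ℝ) (hσ : σ = 1 ∨ σ = -1)
    (H : ∀ j : Fin n, (j : ℕ) ≠ (x : ℕ) → (j : ℕ) ≠ (x : ℕ) + 1 → (j : ℕ) ≠ (y : ℕ) →
      (j : ℕ) ≠ (y : ℕ) + 1 → (j : ℕ) ≠ n - 1 → 0 ≤ σ * u j) : u = 0 := by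
  classical
  have hx1 : (x : ℕ) + 1 < n := by have := y.isLt; omega
  have hy1 : (y : ℕ) + 1 < n := by have := y.isLt; omega
  set x' : Fin n := ⟨(x : ℕ) + 1, hx1⟩ with hx'
  set y' : Fin n := ⟨(y : ℕ) + 1, hy1⟩ with hy'
  set T : Finset (Fin n) := {x, x', y, y'} with hT
  have hmem : ∀ j : Fin n, j ∈ T ↔ ((j : ℕ) = (x : ℕ) ∨ (j : ℕ) = (x : ℕ) + 1 ∨
      (j : ℕ) = (y : ℕ) ∨ (j : ℕ) = (y : ℕ) + 1) := by
    intro j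
    rw [hT]
    simp only [Finset.mem_insert, Finset.mem_singleton, Fin.ext_iff, hx', hy', Fin.val_mk]
  have hcard : T.card ≤ 4 := by
    rw [hT]
    refine le_trans (Finset.card_insert_le _ _) (Nat.succ_le_succ ?_)
    refine le_trans (Finset.card_insert_le _ _) (Nat.succ_le_succ ?_)
    refine le_trans (Finset.card_insert_le _ _) (Nat.succ_le_succ ?_)
    simp
  have hfilt : ∀ j : Fin n, j ∉ T → Even ((T.filter (· < j)).card) := by
    intro j hj
    rw [hmem] at hj
    push_neg at hj
    obtain ⟨h1, h2, h3, h4⟩ := hj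
    have hd1 : x ∉ ({x', y, y'} : Finset (Fin n)) := by
      simp only [Finset.mem_insert, Finset.mem_singleton, Fin.ext_iff, hx', hy', Fin.val_mk]
      omega
    have hd2 : x' ∉ ({y, y'} : Finset (Fin n)) := by
      simp only [Finset.mem_insert, Finset.mem_singleton, Fin.ext_iff, hx', hy', Fin.val_mk]
      omega
    have hd3 : y ∉ ({y'} : Finset (Fin n)) := by
      simp only [Finset.mem_singleton, Fin.ext_iff, hy', Fin.val_mk]
      omega
    have e1 : (if x < j then (1:ℕ) else 0) = (if x' < j then 1 else 0) := by
      have : (x < j) ↔ (x' < j) := by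
        rw [Fin.lt_def, Fin.lt_def, hx']
        simp only [Fin.val_mk]
        omega
      simp only [this]
    have e2 : (if y < j then (1:ℕ) else 0) = (if y' < j then 1 else 0) := by
      have : (y < j) ↔ (y' < j) := by
        rw [Fin.lt_def, Fin.lt_def, hy']
        simp only [Fin.val_mk]
        omega
      simp only [this]
    rw [Finset.card_filter, hT, Finset.sum_insert hd1, Finset.sum_insert hd2,
      Finset.sum_insert hd3, Finset.sum_singleton, ← e1, ← e2]
    split_ifs <;> decide
  apply master hn Z hZ u hu T hcard ?_ σ hσ ?_
  · intro a ha
    rw [hmem] at ha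
    omega
  · intro j hjT hjN
    rw [Even.neg_one_pow (hfilt j hjT), mul_one]
    rw [hmem] at hjT
    push_neg at hjT
    exact H j hjT.1 hjT.2.1 hjT.2.2.1 hjT.2.2.2 hjN

lemma lemmaA {n : ℕ} (hn : 7 ≤ n) (Z : Matrix (Fin 6) (Fin n) ℝ) (hZ : MinorsPos Z)
    (p1 p2 p3 p4 q1 q2 : Fin n) (g1 g2 g3 g4 k1 k2 : Fin n → ℝ)
    (hg1 : IsPosDominoAt p1 g1) (hg2 : IsPosDominoAt p2 g2) (hg3 : IsPosDominoAt p3 g3)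
    (hg4 : IsPosDominoAt p4 g4) (hk1 : IsPosDominoAt q1 k1) (hk2 : IsPosDominoAt q2 k2)
    (h12 : (p1 : ℕ) + 1 < (p2 : ℕ)) (h34 : (p3 : ℕ) + 1 < (p4 : ℕ))
    (hqq : (q1 : ℕ) + 1 < (q2 : ℕ))
    (hp2n : (p2 : ℕ) + 3 ≤ n) (hp4n : (p4 : ℕ) + 3 ≤ n) (hq2n : (q2 : ℕ) + 3 ≤ n)
    (A B C z : ℝ) (u : Fin n → ℝ)
    (hufun : ∀ j, u j = A * (g1 j + g2 j) + B * (g3 j + g4 j) + C * (k1 j + k2 j) +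
      (if (j : ℕ) = n - 1 then z else 0))
    (hu : Z.mulVec u = 0) : u = 0 := by
  have hn6 : 6 ≤ n := by omega
  have hb1 : (p1 : ℕ) + 1 < n := by omega
  have hb2 : (p2 : ℕ) + 1 < n := by omega
  have hb3 : (p3 : ℕ) + 1 < n := by omega
  have hb4 : (p4 : ℕ) + 1 < n := by omega
  have hbq1 : (q1 : ℕ) + 1 < n := by omega
  have hbq2 : (q2 : ℕ) + 1 < n := by omega
  have hn1 := domino_nonneg hg1 hb1
  have hn2 := domino_nonneg hg2 hb2
  have hn3 := domino_nonneg hg3 hb3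
  have hn4 := domino_nonneg hg4 hb4
  have hnk1 := domino_nonneg hk1 hbq1
  have hnk2 := domino_nonneg hk2 hbq2
  have hs1 := domino_supp hg1 hb1
  have hs2 := domino_supp hg2 hb2
  have hs3 := domino_supp hg3 hb3
  have hs4 := domino_supp hg4 hb4
  have hsk1 := domino_supp hk1 hbq1
  have hsk2 := domino_supp hk2 hbq2
  rcases le_total 0 A with hA | hA <;> rcases le_total 0 B with hB | hB
  · -- A ≥ 0, B ≥ 0 : excuse K, σ = 1
    apply applyMaster hn6 Z hZ u hu q1 q2 hqq (by omega) 1 (Or.inl rfl)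
    intro j e1 e2 e3 e4 e5
    have e : u j = A * (g1 j + g2 j) + B * (g3 j + g4 j) := by
      rw [hufun j, hsk1 j e1 e2, hsk2 j e3 e4, if_neg e5]; ring
    rw [one_mul, e]
    have := add_nonneg (hn1 j) (hn2 j)
    have := add_nonneg (hn3 j) (hn4 j)
    positivity
  · -- A ≥ 0, B ≤ 0 : split on C
    rcases le_total 0 C with hC | hC
    · -- excuse G34, σ = 1
      apply applyMaster hn6 Z hZ u hu p3 p4 h34 (by omega) 1 (Or.inl rfl)
      intro j e1 e2 e3 e4 e5
      have e : u j = A * (g1 j + g2 j) + C * (k1 j + k2 j) := by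
        rw [hufun j, hs3 j e1 e2, hs4 j e3 e4, if_neg e5]; ring
      rw [one_mul, e]
      have := add_nonneg (hn1 j) (hn2 j)
      have := add_nonneg (hnk1 j) (hnk2 j)
      positivity
    · -- excuse G12, σ = -1
      apply applyMaster hn6 Z hZ u hu p1 p2 h12 (by omega) (-1) (Or.inr rfl)
      intro j e1 e2 e3 e4 e5
      have e : u j = B * (g3 j + g4 j) + C * (k1 j + k2 j) := by
        rw [hufun j, hs1 j e1 e2, hs2 j e3 e4, if_neg e5]; ring
      rw [e]
      nlinarith [mul_nonneg (neg_nonneg.2 hB) (add_nonneg (hn3 j) (hn4 j)),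
        mul_nonneg (neg_nonneg.2 hC) (add_nonneg (hnk1 j) (hnk2 j))]
  · -- A ≤ 0, B ≥ 0 : split on C
    rcases le_total 0 C with hC | hC
    · -- excuse G12, σ = 1
      apply applyMaster hn6 Z hZ u hu p1 p2 h12 (by omega) 1 (Or.inl rfl)
      intro j e1 e2 e3 e4 e5
      have e : u j = B * (g3 j + g4 j) + C * (k1 j + k2 j) := by
        rw [hufun j, hs1 j e1 e2, hs2 j e3 e4, if_neg e5]; ring
      rw [one_mul, e]
      have := add_nonneg (hn3 j) (hn4 j)
      have := add_nonneg (hnk1 j) (hnk2 j)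
      positivity
    · -- excuse G34, σ = -1
      apply applyMaster hn6 Z hZ u hu p3 p4 h34 (by omega) (-1) (Or.inr rfl)
      intro j e1 e2 e3 e4 e5
      have e : u j = A * (g1 j + g2 j) + C * (k1 j + k2 j) := by
        rw [hufun j, hs3 j e1 e2, hs4 j e3 e4, if_neg e5]; ring
      rw [e]
      nlinarith [mul_nonneg (neg_nonneg.2 hA) (add_nonneg (hn1 j) (hn2 j)),
        mul_nonneg (neg_nonneg.2 hC) (add_nonneg (hnk1 j) (hnk2 j))]
  · -- A ≤ 0, B ≤ 0 : excuse K, σ = -1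
    apply applyMaster hn6 Z hZ u hu q1 q2 hqq (by omega) (-1) (Or.inr rfl)
    intro j e1 e2 e3 e4 e5
    have e : u j = A * (g1 j + g2 j) + B * (g3 j + g4 j) := by
      rw [hufun j, hsk1 j e1 e2, hsk2 j e3 e4, if_neg e5]; ring
    rw [e]
    nlinarith [mul_nonneg (neg_nonneg.2 hA) (add_nonneg (hn1 j) (hn2 j)),
      mul_nonneg (neg_nonneg.2 hB) (add_nonneg (hn3 j) (hn4 j))]

lemma finrank_span_pair_le (x y : Fin 6 → ℝ) :
    Module.finrank ℝ (Submodule.span ℝ {x, y} : Submodule ℝ (Fin 6 → ℝ)) ≤ 2 := by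
  classical
  rw [Submodule.span_insert]
  refine le_trans (Submodule.finrank_add_le_finrank_add_finrank _ _) ?_
  have h1 : Module.finrank ℝ (Submodule.span ℝ {x} : Submodule ℝ (Fin 6 → ℝ)) ≤ 1 := by
    by_cases hx : x = 0
    · subst hx
      rw [Submodule.span_zero_singleton]
      simp
    · rw [finrank_span_singleton hx]
  have h2 : Module.finrank ℝ (Submodule.span ℝ {y} : Submodule ℝ (Fin 6 → ℝ)) ≤ 1 := by
    by_cases hy : y = 0
    · subst hy
      rw [Submodule.span_zero_singleton]
      simp
    · rw [finrank_span_singleton hy]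
  omega

lemma exists_ker_combo {n : ℕ} (Z : Matrix (Fin 6) (Fin n) ℝ)
    (V V' : Submodule ℝ (Fin n → ℝ)) (d e : Fin n → ℝ)
    (hVs : V = Submodule.span ℝ {d, e})
    (hmap : V.map Z.mulVecLin = V'.map Z.mulVecLin)
    (x1 x2 x3 : Fin n → ℝ) (h1 : x1 ∈ V) (h2 : x2 ∈ V) (h3 : x3 ∈ V') :
    ∃ a b c : ℝ, ¬(a = 0 ∧ b = 0 ∧ c = 0) ∧ Z.mulVec (a • x1 + b • x2 + c • x3) = 0 := by
  classical
  set L := Z.mulVecLin with hL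
  set P := V.map L with hP
  have hrank : Module.finrank ℝ P ≤ 2 := by
    rw [hP, hVs, Submodule.map_span]
    have himg : (⇑L '' {d, e}) = {L d, L e} := by
      rw [Set.image_insert_eq, Set.image_singleton]
    rw [himg]
    exact finrank_span_pair_le _ _
  have hy1 : L x1 ∈ P := Submodule.mem_map_of_mem h1
  have hy2 : L x2 ∈ P := Submodule.mem_map_of_mem h2
  have hy3 : L x3 ∈ P := by rw [hmap]; exact Submodule.mem_map_of_mem h3
  have hnli : ¬ LinearIndependent ℝ ![L x1, L x2, L x3] := by
    intro hli
    set w : Fin 3 → ↥P := fun i => ⟨![L x1, L x2, L x3] i, by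
      fin_cases i <;> simpa using ‹_›⟩ with hw
    have hcomp : (⇑P.subtype) ∘ w = ![L x1, L x2, L x3] := by
      funext i
      simp [hw]
    have hliw : LinearIndependent ℝ w := by
      apply LinearIndependent.of_comp P.subtype
      rw [hcomp]
      exact hli
    have hcle := hliw.fintype_card_le_finrank
    simp only [Fintype.card_fin] at hcle
    omega
  rw [Fintype.not_linearIndependent_iff] at hnli
  obtain ⟨g, hg, i, hgi⟩ := hnli
  refine ⟨g 0, g 1, g 2, ?_, ?_⟩
  · rintro ⟨e0, e1, e2⟩
    fin_cases i <;> simp_all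
  · have hlin : Z.mulVec (g 0 • x1 + g 1 • x2 + g 2 • x3) =
        g 0 • L x1 + g 1 • L x2 + g 2 • L x3 := by
      simp [hL, Matrix.mulVecLin_apply, Matrix.mulVec_add, Matrix.mulVec_smul]
    rw [hlin]
    rw [Fin.sum_univ_three] at hg
    simpa using hg

end OVIO

open OVIO

/-- Lemma 10.10: the images under a totally positive `6 × n` matrix of two distinct
orthodox 2-dimensional totally nonnegative subspaces are distinct. -/


theorem orthodox_vs_orthodox (n : ℕ) (Z : Matrix (Fin 6) (Fin n) ℝ)
    (hZ : MinorsPos Z) (V V' : Submodule ℝ (Fin n → ℝ)) (hne : V ≠ V')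
    (hV : IsTNNSubspace 2 n V) (hV' : IsTNNSubspace 2 n V')
    (hVo : IsOrthodox V) (hV'o : IsOrthodox V') :
    V.map Z.mulVecLin ≠ V'.map Z.mulVecLin := by
  intro hmap
  obtain ⟨d, e, d1, d2, d3, d4,
    ⟨i1, i2, i3, i4, hd1, hd2, hd3, hd4, o12, o23, o34, o4n⟩,
    li4, hVs, hbd, hdN, hbe, heN⟩ := hVo
  obtain ⟨d', e', d1', d2', d3', d4',
    ⟨j1, j2, j3, j4, hd1', hd2', hd3', hd4', o12', o23', o34', o4n'⟩,
    li4', hV's, hbd', hdN', hbe', heN'⟩ := hV'o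
  have hn : 7 ≤ n := by omega
  set NN : Fin n := ⟨n - 1, by omega⟩ with hNN
  have hNv : (NN : ℕ) = n - 1 := rfl
  -- supports at the last coordinate
  have hzN : ∀ (p : Fin n) (g : Fin n → ℝ), IsPosDominoAt p g → (p : ℕ) + 3 ≤ n → g NN = 0 := by
    intro p g hg hp
    exact domino_supp hg (by omega) NN (by rw [hNv]; omega) (by rw [hNv]; omega)
  have hd1N : d1 NN = 0 := hzN i1 d1 hd1 (by omega)
  have hd2N : d2 NN = 0 := hzN i2 d2 hd2 (by omega)
  have hd3N : d3 NN = 0 := hzN i3 d3 hd3 (by omega)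
  have hd4N : d4 NN = 0 := hzN i4 d4 hd4 o4n
  have hd1'N : d1' NN = 0 := hzN j1 d1' hd1' (by omega)
  have hd2'N : d2' NN = 0 := hzN j2 d2' hd2' (by omega)
  have hd3'N : d3' NN = 0 := hzN j3 d3' hd3' (by omega)
  have hd4'N : d4' NN = 0 := hzN j4 d4' hd4' o4n'
  -- decompositions
  have hdecomp : ∀ (v w1 w2 : Fin n → ℝ), barVec v = w1 + w2 → w1 NN = 0 → w2 NN = 0 →
      ∀ jj : Fin n, v jj = w1 jj + w2 jj + (if (jj : ℕ) = n - 1 then v NN else 0) := by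
    intro v w1 w2 hbv h1 h2 jj
    by_cases hj : (jj : ℕ) = n - 1
    · have hjN : jj = NN := Fin.ext (by rw [hNv]; exact hj)
      rw [if_pos hj, hjN, h1, h2]; ring
    · rw [if_neg hj]
      have hb := congrFun hbv jj
      simp only [barVec, Pi.add_apply] at hb
      rw [if_neg hj] at hb
      rw [hb]; ring
  have hD := hdecomp d d1 d2 hbd hd1N hd2N
  have hE := hdecomp e d3 d4 hbe hd3N hd4N
  have hD' := hdecomp d' d1' d2' hbd' hd1'N hd2'N
  have hE' := hdecomp e' d3' d4' hbe' hd3'N hd4'N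
  have heNpos : 0 < e NN := heN NN hNv
  have he'Npos : 0 < e' NN := heN' NN hNv
  -- linear independence of the standard bases
  have hli : ∀ (iA : Fin n) (wA wB w1 w2 w3 w4 : Fin n → ℝ),
      IsPosDominoAt iA w1 → (iA : ℕ) + 1 < n →
      (∀ jj, wA jj = w1 jj + w2 jj + (if (jj : ℕ) = n - 1 then wA NN else 0)) →
      (∀ jj, wB jj = w3 jj + w4 jj + (if (jj : ℕ) = n - 1 then wB NN else 0)) →
      w2 iA = 0 → w3 iA = 0 → w4 iA = 0 → (iA : ℕ) ≠ n - 1 → 0 < wB NN →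
      ∀ s t : ℝ, s • wA + t • wB = 0 → s = 0 ∧ t = 0 := by
    intro iA wA wB w1 w2 w3 w4 hw1 hiA hA hB h2 h3 h4 hiAN hBN s t hst
    have h1 := congrFun hst iA
    simp only [Pi.add_apply, Pi.smul_apply, smul_eq_mul, Pi.zero_apply] at h1
    rw [hA iA, hB iA, if_neg hiAN, if_neg hiAN, h2, h3, h4] at h1
    have hs : s = 0 := by
      have := domino_pos1 hw1
      have : s * w1 iA = 0 := by linarith
      rcases mul_eq_zero.mp this with h | h
      · exact h
      · exact absurd h (ne_of_gt (domino_pos1 hw1))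
    subst hs
    have h2' := congrFun hst NN
    simp only [Pi.add_apply, Pi.smul_apply, smul_eq_mul, Pi.zero_apply] at h2'
    have ht : t * wB NN = 0 := by linarith
    rcases mul_eq_zero.mp ht with h | h
    · exact ⟨rfl, h⟩
    · exact absurd h (ne_of_gt hBN)
  have li_de : ∀ s t : ℝ, s • d + t • e = 0 → s = 0 ∧ t = 0 := by
    refine hli i1 d e d1 d2 d3 d4 hd1 (by omega) hD hE ?_ ?_ ?_ (by omega) heNpos
    · exact domino_supp hd2 (by omega) i1 (by omega) (by omega)
    · exact domino_supp hd3 (by omega) i1 (by omega) (by omega)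
    · exact domino_supp hd4 (by omega) i1 (by omega) (by omega)
  have li_de' : ∀ s t : ℝ, s • d' + t • e' = 0 → s = 0 ∧ t = 0 := by
    refine hli j1 d' e' d1' d2' d3' d4' hd1' (by omega) hD' hE' ?_ ?_ ?_ (by omega) he'Npos
    · exact domino_supp hd2' (by omega) j1 (by omega) (by omega)
    · exact domino_supp hd3' (by omega) j1 (by omega) (by omega)
    · exact domino_supp hd4' (by omega) j1 (by omega) (by omega)
  -- memberships
  have hdV : d ∈ V := by
    rw [hVs]; exact Submodule.subset_span (Set.mem_insert _ _)
  have heV : e ∈ V := by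
    rw [hVs]; exact Submodule.subset_span (Set.mem_insert_of_mem _ rfl)
  have hd'V' : d' ∈ V' := by
    rw [hV's]; exact Submodule.subset_span (Set.mem_insert _ _)
  have he'V' : e' ∈ V' := by
    rw [hV's]; exact Submodule.subset_span (Set.mem_insert_of_mem _ rfl)
  -- first relation : (d, e, e')
  obtain ⟨a, b, c, habc, hker1⟩ := exists_ker_combo Z V V' d e hVs hmap d e e' hdV heV he'V'
  have hshape1 : ∀ jj, (a • d + b • e + c • e') jj =
      a * (d1 jj + d2 jj) + b * (d3 jj + d4 jj) + c * (d3' jj + d4' jj) +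
      (if (jj : ℕ) = n - 1 then a * d NN + b * e NN + c * e' NN else 0) := by
    intro jj
    simp only [Pi.add_apply, Pi.smul_apply, smul_eq_mul]
    rw [hD jj, hE jj, hE' jj]
    split_ifs <;> ring
  have hu1 : a • d + b • e + c • e' = 0 :=
    lemmaA hn Z hZ i1 i2 i3 i4 j3 j4 d1 d2 d3 d4 d3' d4'
      hd1 hd2 hd3 hd4 hd3' hd4' o12 o34 o34'
      (by omega) o4n o4n' a b c _ _ hshape1 hker1
  have hc : c ≠ 0 := by
    intro hc0
    subst hc0
    have : a • d + b • e = 0 := by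
      have := hu1
      simpa using this
    obtain ⟨ha0, hb0⟩ := li_de a b this
    exact habc ⟨ha0, hb0, rfl⟩
  have he'V : e' ∈ V := by
    have he'eq : e' = (-(c⁻¹ * a)) • d + (-(c⁻¹ * b)) • e := by
      funext jj
      have h := congrFun hu1 jj
      simp only [Pi.add_apply, Pi.smul_apply, smul_eq_mul, Pi.zero_apply] at h ⊢
      have h3 : e' jj = c⁻¹ * (c * e' jj) := by field_simp
      rw [h3, show c * e' jj = -(a * d jj) - b * e jj by linarith]
      ring
    rw [he'eq]
    exact Submodule.add_mem _ (Submodule.smul_mem _ _ hdV) (Submodule.smul_mem _ _ heV)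
  -- second relation : (d, e, d')
  obtain ⟨α, β, γ, habc3, hker3⟩ := exists_ker_combo Z V V' d e hVs hmap d e d' hdV heV hd'V'
  have hshape3 : ∀ jj, (α • d + β • e + γ • d') jj =
      α * (d1 jj + d2 jj) + β * (d3 jj + d4 jj) + γ * (d1' jj + d2' jj) +
      (if (jj : ℕ) = n - 1 then α * d NN + β * e NN + γ * d' NN else 0) := by
    intro jj
    simp only [Pi.add_apply, Pi.smul_apply, smul_eq_mul]
    rw [hD jj, hE jj, hD' jj]
    split_ifs <;> ring
  have hu3 : α • d + β • e + γ • d' = 0 :=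
    lemmaA hn Z hZ i1 i2 i3 i4 j1 j2 d1 d2 d3 d4 d1' d2'
      hd1 hd2 hd3 hd4 hd1' hd2' o12 o34 o12'
      (by omega) o4n (by omega) α β γ _ _ hshape3 hker3
  have hγ : γ ≠ 0 := by
    intro hg0
    subst hg0
    have : α • d + β • e = 0 := by
      have := hu3
      simpa using this
    obtain ⟨ha0, hb0⟩ := li_de α β this
    exact habc3 ⟨ha0, hb0, rfl⟩
  have hd'V : d' ∈ V := by
    have hd'eq : d' = (-(γ⁻¹ * α)) • d + (-(γ⁻¹ * β)) • e := by
      funext jj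
      have h := congrFun hu3 jj
      simp only [Pi.add_apply, Pi.smul_apply, smul_eq_mul, Pi.zero_apply] at h ⊢
      have h3 : d' jj = γ⁻¹ * (γ * d' jj) := by field_simp
      rw [h3, show γ * d' jj = -(α * d jj) - β * e jj by linarith]
      ring
    rw [hd'eq]
    exact Submodule.add_mem _ (Submodule.smul_mem _ _ hdV) (Submodule.smul_mem _ _ heV)
  -- conclude V' ≤ V and equality of dimensions
  have hV'leV : V' ≤ V := by
    rw [hV's]
    rw [Submodule.span_le]
    intro x hx
    rcases hx with rfl | hx
    · exact hd'V
    · rw [Set.mem_singleton_iff] at hx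
      subst hx
      exact he'V
  have hfrV : Module.finrank ℝ V = 2 := by
    have hrange : Set.range ![d, e] = {d, e} := by
      simp only [Matrix.range_cons, Matrix.range_empty, Set.singleton_union, Set.union_empty]
    have hli2 : LinearIndependent ℝ ![d, e] := LinearIndependent.pair_iff.mpr li_de
    have := finrank_span_eq_card hli2
    rw [hrange] at this
    rw [hVs, this, Fintype.card_fin]
  have hfrV' : Module.finrank ℝ V' = 2 := by
    have hrange : Set.range ![d', e'] = {d', e'} := by
      simp only [Matrix.range_cons, Matrix.range_empty, Set.singleton_union, Set.union_empty]
    have hli2 : LinearIndependent ℝ ![d', e'] := LinearIndependent.pair_iff.mpr li_de'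
    have := finrank_span_eq_card hli2
    rw [hrange] at this
    rw [hV's, this, Fintype.card_fin]
  have : V' = V := Submodule.eq_of_le_of_finrank_le hV'leV (by rw [hfrV, hfrV'])
  exact hne this.symm
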